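/- Consider the action of ℤ_n × ℤ_n on the symmetric group S_n where (r, k) acts on a permutation P (viewed as a sequence (P₁,…,P_n) of values) by cyclically shifting indices by r and translating values by k modulo n. The stabilizer of any permutation under this action is a cyclic group whose order divides n. -/
import Mathlib


/-- The stabilizer of a permutation `P` of `ℤ/n` under the action of `ℤ/n × ℤ/n` by cyclic
shift of indices and translation of values: `{(r,k) : ∀ i, P(i+r) + k = P(i)}`. -/
def patternStab (n : ℕ) (P : Equiv.Perm (ZMod n)) : AddSubgroup (ZMod n × ZMod n) where
  carrier := {rk | ∀ i, P (i + rk.1) + rk.2 = P i}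
  zero_mem' := by intro i; simp
  add_mem' := by
    intro x y hx hy i
    have h1 := hx i
    have h2 := hy (i + x.1)
    calc P (i + (x + y).1) + (x + y).2
        = (P (i + x.1 + y.1) + y.2) + x.2 := by
          simp only [Prod.fst_add, Prod.snd_add]; ring_nf
      _ = P (i + x.1) + x.2 := by rw [h2]
      _ = P i := h1
  neg_mem' := by
    intro x hx i
    have h := hx (i - x.1)
    have : P i = P (i - x.1) - x.2 := by
      rw [← h]; simp [sub_add_cancel]
    rw [this]
    simp [Prod.fst_neg, Prod.snd_neg, sub_eq_add_neg]

/-- Under the action of `ℤ/n × ℤ/n` on permutations of `ℤ/n` by cyclic index shift and value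
translation, the stabilizer of any permutation is a cyclic group whose order divides `n`. -/
theorem stmt14 (n : ℕ) [NeZero n] (P : Equiv.Perm (ZMod n)) :
    IsAddCyclic ↥(patternStab n P) ∧ Nat.card ↥(patternStab n P) ∣ n := by
  let f : ↥(patternStab n P) →+ ZMod n :=
    { toFun := fun x => x.1.1
      map_zero' := rfl
      map_add' := fun a b => rfl }
  have hf : Function.Injective f := by
    intro a b h
    have h1 : a.1.1 = b.1.1 := h
    have ha := a.2 0
    have hb := b.2 0
    ext
    · exact h1
    · have h2 : P (0 + (a : ZMod n × ZMod n).1) + (a : ZMod n × ZMod n).2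
          = P (0 + (b : ZMod n × ZMod n).1) + (b : ZMod n × ZMod n).2 := ha.trans hb.symm
      rw [h1] at h2
      exact add_left_cancel h2
  have e : ↥(patternStab n P) ≃+ f.range := AddMonoidHom.ofInjective hf
  constructor
  · have : IsAddCyclic ↥f.range := inferInstance
    exact isAddCyclic_of_surjective e.symm e.symm.surjective
  · rw [Nat.card_congr e.toEquiv]
    exact (AddSubgroup.card_addSubgroup_dvd_card _).trans n.card_zmod.dvd
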